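/- Consider 3×3 integer matrices B of one of the following five shapes, with integers a, b, c ≥ 2: fermat diag(a,b,c); chain [[a,1,0],[0,b,1],[0,0,c]]; loop [[a,1,0],[0,b,1],[1,0,c]]; chain+fermat [[a,1,0],[0,b,0],[0,0,c]]; loop+fermat [[a,1,0],[1,b,0],[0,0,c]]. Among all such matrices B and all permutations w of the weight vector (4,3,3) satisfying the quasihomogeneity condition B·w = (15,15,15)ᵀ, the only solutions are (up to the permutation of variables) the chain matrix [[3,1,0],[0,4,1],[0,0,5]] with weights (4,3,3) and the chain+fermat matrix [[3,1,0],[0,5,0],[0,0,5]] with weights (4,3,3). (These correspond to the only two invertible polynomials of the form x³ + f(y,z,w) with weight system (5,4,3,3;15), namely W₁ = x³ + y³z + z⁴w + w⁵ and W₂ = x³ + y³z + z⁵ + w⁵.) -/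

import Mathlib

open scoped BigOperators
open Matrix

/-- among the five shapes of exponent matrices of invertible polynomials in
three variables (fermat, chain, loop, chain+fermat, loop+fermat, with all exponents
`a, b, c ≥ 2`) and all permutations `w` of the weight vector `(4,3,3)`, the only solutions
of the quasihomogeneity condition `B·w = (15,15,15)ᵀ` are the chain matrix
`[[3,1,0],[0,4,1],[0,0,5]]` with weights `(4,3,3)` (i.e. `W₁ = x³+y³z+z⁴w+w⁵` as a
polynomial `x³+f(y,z,w)` of weight system `(5,4,3,3;15)`) and the chain+fermat matrix
`[[3,1,0],[0,5,0],[0,0,5]]` with weights `(4,3,3)` (i.e. `W₂ = x³+y³z+z⁵+w⁵`). -/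
theorem weight_system_classification (B : Matrix (Fin 3) (Fin 3) ℤ) (a b c : ℤ)
    (ha : 2 ≤ a) (hb : 2 ≤ b) (hc : 2 ≤ c)
    (hB : B = !![a, 0, 0; 0, b, 0; 0, 0, c] ∨
          B = !![a, 1, 0; 0, b, 1; 0, 0, c] ∨
          B = !![a, 1, 0; 0, b, 1; 1, 0, c] ∨
          B = !![a, 1, 0; 0, b, 0; 0, 0, c] ∨
          B = !![a, 1, 0; 1, b, 0; 0, 0, c])
    (w : Fin 3 → ℤ) (hw : ∃ σ : Equiv.Perm (Fin 3), ∀ i, w i = ![4, 3, 3] (σ i))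
    (hq : B.mulVec w = ![15, 15, 15]) :
    (B = !![3, 1, 0; 0, 4, 1; 0, 0, 5] ∧ w = ![4, 3, 3]) ∨
    (B = !![3, 1, 0; 0, 5, 0; 0, 0, 5] ∧ w = ![4, 3, 3]) := by
  obtain ⟨σ, hσ⟩ := hw
  have hv : ∀ i, w i = 3 ∨ w i = 4 := by
    intro i
    rw [hσ i]
    generalize σ i = j
    fin_cases j <;> simp
  have hsum : w 0 + w 1 + w 2 = 10 := by
    have h := Equiv.sum_comp σ ![(4:ℤ), 3, 3]
    rw [Fin.sum_univ_three] at h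
    rw [← hσ 0, ← hσ 1, ← hσ 2] at h
    simpa [Fin.sum_univ_three] using h
  have hw3 : (w 0 = 4 ∧ w 1 = 3 ∧ w 2 = 3) ∨ (w 0 = 3 ∧ w 1 = 4 ∧ w 2 = 3) ∨
      (w 0 = 3 ∧ w 1 = 3 ∧ w 2 = 4) := by
    have := hv 0; have := hv 1; have := hv 2; omega
  have hweq : (w 0 = 4 ∧ w 1 = 3 ∧ w 2 = 3) → w = ![4, 3, 3] := by
    rintro ⟨e0, e1, e2⟩
    funext i
    fin_cases i <;> simp_all
  have h0 := congrFun hq 0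
  have h1 := congrFun hq 1
  have h2 := congrFun hq 2
  rcases hB with rfl | rfl | rfl | rfl | rfl <;>
    simp [Matrix.mulVec, dotProduct, Fin.sum_univ_three] at h0 h1 h2 <;>
    rcases hw3 with ⟨e0, e1, e2⟩ | ⟨e0, e1, e2⟩ | ⟨e0, e1, e2⟩ <;>
    (try simp only [e0, e1, e2] at h0) <;>
    (try simp only [e0, e1, e2] at h1) <;>
    (try simp only [e0, e1, e2] at h2) <;>
    first
      | (exfalso; omega)
      | (left
         have ha3 : a = 3 := by omega
         have hb4 : b = 4 := by omega
         have hc5 : c = 5 := by omega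
         subst ha3 hb4 hc5
         exact ⟨rfl, hweq ⟨e0, e1, e2⟩⟩)
      | (right
         have ha3 : a = 3 := by omega
         have hb5 : b = 5 := by omega
         have hc5 : c = 5 := by omega
         subst ha3 hb5 hc5
         exact ⟨rfl, hweq ⟨e0, e1, e2⟩⟩)
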